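/- For all t > 0, 1/2 < φ(t) < 1, where φ(t) = 1/(1 − e^{−t}) − 1/t. -/

import Mathlib

open Real

/-- If `f 0 = 0` and `f` has positive derivative on `(0, ∞)`, then `f t > 0` for `t > 0`. -/
lemma aux_pos_of_deriv_pos {f f' : ℝ → ℝ} (hd : ∀ x, HasDerivAt f (f' x) x)
    (h0 : f 0 = 0) (hp : ∀ x, 0 < x → 0 < f' x) {t : ℝ} (ht : 0 < t) : 0 < f t := by
  have hmono : StrictMonoOn f (Set.Ici 0) := by
    refine strictMonoOn_of_deriv_pos (convex_Ici 0)
      (fun x _ => (hd x).continuousAt.continuousWithinAt) ?_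
    intro x hx
    rw [interior_Ici] at hx
    rw [(hd x).deriv]
    exact hp x hx
  have := hmono Set.self_mem_Ici (Set.mem_Ici.mpr ht.le) ht
  rwa [h0] at this

lemma exp_neg_hasDerivAt (x : ℝ) :
    HasDerivAt (fun y : ℝ => Real.exp (-y)) (-Real.exp (-x)) x := by
  simpa [Function.comp_def] using (Real.hasDerivAt_exp (-x)).comp x ((hasDerivAt_id x).neg)

lemma exp_neg_gt1 {t : ℝ} (ht : 0 < t) : 1 - t < Real.exp (-t) := by
  nlinarith [Real.add_one_lt_exp (show -t ≠ 0 by linarith)]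

lemma exp_neg_lt2 {t : ℝ} (ht : 0 < t) : Real.exp (-t) < 1 - t + t ^ 2 / 2 := by
  have := aux_pos_of_deriv_pos (f := fun x => 1 - x + x ^ 2 / 2 - Real.exp (-x))
    (f' := fun x => -1 + x + Real.exp (-x)) ?_ (by norm_num) ?_ ht
  · linarith
  · intro x
    have h1 : HasDerivAt (fun y : ℝ => 1 - y + y ^ 2 / 2) (-1 + x) x := by
      have := ((hasDerivAt_pow 2 x).div_const 2)
      have h2 := ((hasDerivAt_const x (1:ℝ)).sub (hasDerivAt_id x)).add this
      refine h2.congr_deriv ?_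
      ring
    have := h1.sub (exp_neg_hasDerivAt x)
    refine this.congr_deriv ?_
    ring
  · intro x hx
    nlinarith [exp_neg_gt1 hx]

lemma exp_neg_gt3 {t : ℝ} (ht : 0 < t) :
    1 - t + t ^ 2 / 2 - t ^ 3 / 6 < Real.exp (-t) := by
  have := aux_pos_of_deriv_pos
    (f := fun x => Real.exp (-x) - (1 - x + x ^ 2 / 2 - x ^ 3 / 6))
    (f' := fun x => -Real.exp (-x) + (1 - x + x ^ 2 / 2)) ?_ (by norm_num) ?_ ht
  · linarith
  · intro x
    have h1 : HasDerivAt (fun y : ℝ => 1 - y + y ^ 2 / 2 - y ^ 3 / 6)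
        (-1 + x - x ^ 2 / 2) x := by
      have ha := ((hasDerivAt_const x (1:ℝ)).sub (hasDerivAt_id x)).add
        ((hasDerivAt_pow 2 x).div_const 2)
      have hb := ha.sub ((hasDerivAt_pow 3 x).div_const 6)
      refine hb.congr_deriv ?_
      ring
    have := (exp_neg_hasDerivAt x).sub h1
    refine this.congr_deriv ?_
    ring
  · intro x hx
    nlinarith [exp_neg_lt2 hx]

lemma exp_neg_lt4 {t : ℝ} (ht : 0 < t) :
    Real.exp (-t) < 1 - t + t ^ 2 / 2 - t ^ 3 / 6 + t ^ 4 / 24 := by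
  have := aux_pos_of_deriv_pos
    (f := fun x => 1 - x + x ^ 2 / 2 - x ^ 3 / 6 + x ^ 4 / 24 - Real.exp (-x))
    (f' := fun x => -1 + x - x ^ 2 / 2 + x ^ 3 / 6 + Real.exp (-x)) ?_ (by norm_num) ?_ ht
  · linarith
  · intro x
    have h1 : HasDerivAt (fun y : ℝ => 1 - y + y ^ 2 / 2 - y ^ 3 / 6 + y ^ 4 / 24)
        (-1 + x - x ^ 2 / 2 + x ^ 3 / 6) x := by
      have ha := (((hasDerivAt_const x (1:ℝ)).sub (hasDerivAt_id x)).add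
        ((hasDerivAt_pow 2 x).div_const 2)).sub ((hasDerivAt_pow 3 x).div_const 6)
      have hb := ha.add ((hasDerivAt_pow 4 x).div_const 24)
      refine hb.congr_deriv ?_
      ring
    have := h1.sub (exp_neg_hasDerivAt x)
    refine this.congr_deriv ?_
    ring
  · intro x hx
    nlinarith [exp_neg_gt3 hx]

lemma exp_neg_gt5 {t : ℝ} (ht : 0 < t) :
    1 - t + t ^ 2 / 2 - t ^ 3 / 6 + t ^ 4 / 24 - t ^ 5 / 120 < Real.exp (-t) := by
  have := aux_pos_of_deriv_pos
    (f := fun x => Real.exp (-x) - (1 - x + x ^ 2 / 2 - x ^ 3 / 6 + x ^ 4 / 24 - x ^ 5 / 120))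
    (f' := fun x => -Real.exp (-x) + (1 - x + x ^ 2 / 2 - x ^ 3 / 6 + x ^ 4 / 24)) ?_
    (by norm_num) ?_ ht
  · linarith
  · intro x
    have h1 : HasDerivAt
        (fun y : ℝ => 1 - y + y ^ 2 / 2 - y ^ 3 / 6 + y ^ 4 / 24 - y ^ 5 / 120)
        (-1 + x - x ^ 2 / 2 + x ^ 3 / 6 - x ^ 4 / 24) x := by
      have ha := ((((hasDerivAt_const x (1:ℝ)).sub (hasDerivAt_id x)).add
        ((hasDerivAt_pow 2 x).div_const 2)).sub ((hasDerivAt_pow 3 x).div_const 6)).add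
        ((hasDerivAt_pow 4 x).div_const 24)
      have hb := ha.sub ((hasDerivAt_pow 5 x).div_const 120)
      refine hb.congr_deriv ?_
      ring
    have := (exp_neg_hasDerivAt x).sub h1
    refine this.congr_deriv ?_
    ring
  · intro x hx
    nlinarith [exp_neg_lt4 hx]

theorem phi_bounds (t : ℝ) (ht : 0 < t) :
    1 / 2 < 1 / (1 - Real.exp (-t)) - 1 / t ∧
      1 / (1 - Real.exp (-t)) - 1 / t < 1 := by
  have hex : Real.exp (-t) < 1 := Real.exp_lt_one_iff.mpr (by linarith)
  have hden : 0 < 1 - Real.exp (-t) := by linarith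
  have het : 0 < Real.exp t := Real.exp_pos t
  have hxp : 0 < Real.exp (-t) := Real.exp_pos _
  have hprod : Real.exp t * Real.exp (-t) = 1 := by
    rw [← Real.exp_add]; simp
  constructor
  · -- lower bound; key: (2 - t) * exp t < t + 2
    have key : (2 - t) * Real.exp t < t + 2 := by
      rcases lt_or_ge t 2 with h2 | h2
      · have hq := exp_neg_gt5 ht
        have hpoly : 2 - t < (t + 2) * (1 - t + t ^ 2 / 2 - t ^ 3 / 6 + t ^ 4 / 24 - t ^ 5 / 120) := by
          nlinarith [pow_pos ht 3, sq_nonneg t, mul_pos (pow_pos ht 2) (sub_pos.mpr h2)]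
        have h3 : 2 - t < (t + 2) * Real.exp (-t) := by nlinarith
        have := mul_lt_mul_of_pos_right h3 het
        nlinarith [hprod]
      · nlinarith
    rw [div_sub_div _ _ hden.ne' ht.ne', lt_div_iff₀ (by positivity)]
    nlinarith [mul_lt_mul_of_pos_right key hxp, hprod]
  · rw [div_sub_div _ _ hden.ne' ht.ne', div_lt_one (by positivity)]
    nlinarith [Real.add_one_lt_exp (ne_of_gt ht), hprod, het, mul_lt_mul_of_pos_right (Real.add_one_lt_exp (ne_of_gt ht)) hxp]
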